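/- Let t_n denote the number of independent dominating sets of the chain triangular cactus T_n. Then t_1 = 3, t_2 = 5, and for every n ≥ 3, t_n = t_{n-1} + t_{n-2}. -/

import Mathlib

/-- `S` is an independent dominating set of `G`: pairwise non-adjacent, and every
vertex outside `S` has a neighbour in `S`. -/
def IsIndepDomSet {V : Type*} (G : SimpleGraph V) (S : Finset V) : Prop :=
  (∀ v ∈ S, ∀ w ∈ S, ¬ G.Adj v w) ∧ ∀ v, v ∉ S → ∃ w ∈ S, G.Adj v w

/-- The chain triangular cactus `T n`: vertices `Sum.inl i` are `x i`
(`0 ≤ i ≤ n`) and `Sum.inr k` is `y (k+1)` (`0 ≤ k ≤ n-1`); the `i`-th triangle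
(`1 ≤ i ≤ n`) has vertices `x (i-1)`, `x i`, `y i`. -/
def triChain (n : ℕ) : SimpleGraph (Fin (n + 1) ⊕ Fin n) :=
  SimpleGraph.fromRel fun p q =>
    match p, q with
    | Sum.inl i, Sum.inl j => (i : ℕ) + 1 = (j : ℕ)
    | Sum.inl i, Sum.inr k => (i : ℕ) = (k : ℕ) ∨ (i : ℕ) = (k : ℕ) + 1
    | _, _ => False

/-- The number of independent dominating sets of the chain triangular cactus `T n`. -/
noncomputable def numIDSTri (n : ℕ) : ℕ :=
  Nat.card {S : Finset (Fin (n + 1) ⊕ Fin n) // IsIndepDomSet (triChain n) S}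

/-- `t 1 = 3`, `t 2 = 5`, and `t n = t (n-1) + t (n-2)` for `n ≥ 3`, where `t n` is
the number of independent dominating sets of the chain triangular cactus `T n`. -/
lemma adj_ll {n : ℕ} {i j : Fin (n+1)} :
    (triChain n).Adj (.inl i) (.inl j) ↔ ((i:ℕ)+1 = j ∨ (j:ℕ)+1 = i) := by
  simp only [triChain, SimpleGraph.fromRel_adj, ne_eq, Sum.inl.injEq]
  constructor
  · rintro ⟨_, h⟩; exact h
  · intro h
    refine ⟨fun hij => ?_, h⟩
    subst hij; omega

lemma adj_lr {n : ℕ} {i : Fin (n+1)} {k : Fin n} :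
    (triChain n).Adj (.inl i) (.inr k) ↔ ((i:ℕ) = k ∨ (i:ℕ) = (k:ℕ)+1) := by
  simp only [triChain, SimpleGraph.fromRel_adj, ne_eq]
  constructor
  · rintro ⟨_, h | h⟩
    · exact h
    · exact h.elim
  · intro h; exact ⟨by simp, Or.inl h⟩

lemma adj_rl {n : ℕ} {i : Fin (n+1)} {k : Fin n} :
    (triChain n).Adj (.inr k) (.inl i) ↔ ((i:ℕ) = k ∨ (i:ℕ) = (k:ℕ)+1) := by
  rw [SimpleGraph.adj_comm]; exact adj_lr

lemma adj_rr {n : ℕ} {k l : Fin n} : ¬ (triChain n).Adj (.inr k) (.inr l) := by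
  simp [triChain, SimpleGraph.fromRel_adj]

/-- allowed transitions: value 0 = pick `x i` (left corner of triangle `i+1`),
1 = pick `y (i+1)`, 2 = pick `x (i+1)` (right corner). -/
def ok : Fin 3 → Fin 3 → Bool
  | 0, 0 => false
  | 1, 0 => false
  | 2, 1 => false
  | 2, 2 => false
  | _, _ => true

def Valid (n : ℕ) (f : Fin n → Fin 3) : Prop :=
  ∀ i : Fin n, ∀ h : (i : ℕ) + 1 < n, ok (f i) (f ⟨(i:ℕ)+1, h⟩) = true

instance (n : ℕ) (f : Fin n → Fin 3) : Decidable (Valid n f) :=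
  inferInstanceAs (Decidable (∀ _, _))

def vtx {n : ℕ} (i : Fin n) : Fin 3 → Fin (n+1) ⊕ Fin n
  | 0 => Sum.inl ⟨(i:ℕ), by omega⟩
  | 1 => Sum.inr i
  | 2 => Sum.inl ⟨(i:ℕ)+1, by omega⟩

lemma vtx_eq_inl {n : ℕ} {i : Fin n} {a : Fin 3} {j : Fin (n+1)} :
    vtx i a = Sum.inl j ↔ (a = 0 ∧ (j:ℕ) = i) ∨ (a = 2 ∧ (j:ℕ) = (i:ℕ)+1) := by
  match a with
  | 0 => simp [vtx, Fin.ext_iff, eq_comm]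
  | 1 => simp [vtx]
  | 2 => simp [vtx, Fin.ext_iff, eq_comm]

lemma vtx_eq_inr {n : ℕ} {i : Fin n} {a : Fin 3} {k : Fin n} :
    vtx i a = Sum.inr k ↔ (a = 1 ∧ i = k) := by
  match a with
  | 0 => simp [vtx]
  | 1 => simp [vtx]
  | 2 => simp [vtx]

def toSet {n : ℕ} (f : Fin n → Fin 3) : Finset (Fin (n+1) ⊕ Fin n) :=
  Finset.image (fun i => vtx i (f i)) Finset.univ

lemma mem_toSet {n : ℕ} {f : Fin n → Fin 3} {v} :
    v ∈ toSet f ↔ ∃ i, vtx i (f i) = v := by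
  simp [toSet]

lemma fin3_cases (a : Fin 3) : a = 0 ∨ a = 1 ∨ a = 2 := by revert a; decide

lemma valid_step {n : ℕ} {f : Fin n → Fin 3} (hf : Valid n f) (i j : Fin n)
    (hij : (i:ℕ)+1 = (j:ℕ)) : ok (f i) (f j) = true := by
  have h : (i:ℕ)+1 < n := hij ▸ j.isLt
  have hj : (⟨(i:ℕ)+1, h⟩ : Fin n) = j := Fin.ext hij
  have := hf i h
  rwa [hj] at this

lemma no_bad : ∀ a b c : Fin 3, ok a b = true → ok b c = true → ¬(a = 2 ∧ c = 0) := by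
  decide

lemma indep_aux {n : ℕ} {f : Fin n → Fin 3} (hf : Valid n f) {i j : Fin n}
    (hle : (i:ℕ) ≤ (j:ℕ)) : ¬ (triChain n).Adj (vtx i (f i)) (vtx j (f j)) := by
  intro hadj
  have hij : i = j → False := by
    intro h; subst h; exact (triChain n).irrefl hadj
  rcases hi : vtx i (f i) with p | k <;> rcases hj : vtx j (f j) with q | l <;>
      rw [hi, hj] at hadj
  · rw [adj_ll] at hadj
    rcases vtx_eq_inl.1 hi with ⟨ha, hp⟩ | ⟨ha, hp⟩ <;>
        rcases vtx_eq_inl.1 hj with ⟨hb, hq⟩ | ⟨hb, hq⟩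
    · -- f i = 0, f j = 0, p = i, q = j
      have hj1 : (i:ℕ)+1 = (j:ℕ) := by
        rcases hadj with h | h
        · omega
        · exfalso; exact hij (Fin.ext (by omega))
      have := valid_step hf i j hj1
      rw [ha, hb] at this; exact absurd this (by decide)
    · -- f i = 0, f j = 2
      have : i = j := Fin.ext (by omega)
      subst this; rw [ha] at hb; exact absurd hb (by decide)
    · -- f i = 2, f j = 0 : p = i+1, q = j, dangerous case j = i+2
      have hcase : (j:ℕ) = (i:ℕ) ∨ (j:ℕ) = (i:ℕ)+2 := by omega
      rcases hcase with h | h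
      · exact hij (Fin.ext h.symm)
      · have hm : (i:ℕ)+1 < n := by omega
        have h1 := valid_step hf i ⟨(i:ℕ)+1, hm⟩ rfl
        have h2 := valid_step hf ⟨(i:ℕ)+1, hm⟩ j (by simp; omega)
        exact no_bad _ _ _ h1 h2 ⟨ha, hb⟩
    · -- f i = 2, f j = 2
      have hj1 : (i:ℕ)+1 = (j:ℕ) := by
        have : ¬ ((j:ℕ) < (i:ℕ)) := by omega
        omega
      have := valid_step hf i j hj1
      rw [ha, hb] at this; exact absurd this (by decide)
  · -- vtx i _ = inl p, vtx j _ = inr l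
    rw [adj_lr] at hadj
    obtain ⟨hb, hl⟩ := vtx_eq_inr.1 hj
    subst hl
    rcases vtx_eq_inl.1 hi with ⟨ha, hp⟩ | ⟨ha, hp⟩
    · -- f i = 0, f j = 1 : p = i, cases i = l(=j) or i = j+1
      rcases hadj with h | h
      · exact hij (Fin.ext (by omega))
      · omega
    · -- f i = 2, f j = 1 : p = i+1
      rcases hadj with h | h
      · -- i+1 = j : forbidden (2,1)
        have := valid_step hf i j (by omega)
        rw [ha, hb] at this; exact absurd this (by decide)
      · exact hij (Fin.ext (by omega))
  · -- inr k , inl q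
    rw [adj_rl] at hadj
    obtain ⟨ha, hk⟩ := vtx_eq_inr.1 hi
    subst hk
    rcases vtx_eq_inl.1 hj with ⟨hb, hq⟩ | ⟨hb, hq⟩
    · -- f i = 1, f j = 0
      rcases hadj with h | h
      · exact hij (Fin.ext (by omega))
      · -- j = i+1 : forbidden (1,0)
        have := valid_step hf i j (by omega)
        rw [ha, hb] at this; exact absurd this (by decide)
    · -- f i = 1, f j = 2 : q = j+1; q = k or k+1 with k = i ≤ j
      rcases hadj with h | h
      · omega
      · exact hij (Fin.ext (by omega))
  · exact adj_rr hadj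

lemma indep_toSet {n : ℕ} {f : Fin n → Fin 3} (hf : Valid n f) :
    ∀ v ∈ toSet f, ∀ w ∈ toSet f, ¬ (triChain n).Adj v w := by
  intro v hv w hw
  obtain ⟨i, hi⟩ := mem_toSet.1 hv
  obtain ⟨j, hj⟩ := mem_toSet.1 hw
  subst hi; subst hj
  rcases le_total (i:ℕ) (j:ℕ) with h | h
  · exact indep_aux hf h
  · intro hadj; exact indep_aux hf h hadj.symm

lemma dom_toSet {n : ℕ} {f : Fin n → Fin 3} (hn : 0 < n) :
    ∀ v, v ∉ toSet f → ∃ w ∈ toSet f, (triChain n).Adj v w := by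
  intro v hv
  rcases v with j | k
  · by_cases h : (j:ℕ) < n
    · set i : Fin n := ⟨(j:ℕ), h⟩ with hidef
      refine ⟨vtx i (f i), mem_toSet.2 ⟨i, rfl⟩, ?_⟩
      rcases fin3_cases (f i) with ha | ha | ha <;> rw [ha]
      · exfalso; apply hv; apply mem_toSet.2 ⟨i, ?_⟩
        rw [ha]; exact vtx_eq_inl.2 (Or.inl ⟨rfl, rfl⟩)
      · show (triChain n).Adj (.inl j) (.inr i)
        exact adj_lr.2 (Or.inl rfl)
      · show (triChain n).Adj (.inl j) (.inl ⟨(i:ℕ)+1, _⟩)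
        exact adj_ll.2 (Or.inl rfl)
    · -- j = n
      have hjn : (j:ℕ) = n := by omega
      set i : Fin n := ⟨n-1, by omega⟩ with hidef
      refine ⟨vtx i (f i), mem_toSet.2 ⟨i, rfl⟩, ?_⟩
      rcases fin3_cases (f i) with ha | ha | ha <;> rw [ha]
      · show (triChain n).Adj (.inl j) (.inl ⟨(i:ℕ), _⟩)
        exact adj_ll.2 (Or.inr (by simp [hidef]; omega))
      · show (triChain n).Adj (.inl j) (.inr i)
        exact adj_lr.2 (Or.inr (by simp [hidef]; omega))
      · exfalso; apply hv; apply mem_toSet.2 ⟨i, ?_⟩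
        rw [ha]; exact vtx_eq_inl.2 (Or.inr ⟨rfl, by simp [hidef]; omega⟩)
  · refine ⟨vtx k (f k), mem_toSet.2 ⟨k, rfl⟩, ?_⟩
    rcases fin3_cases (f k) with ha | ha | ha <;> rw [ha]
    · show (triChain n).Adj (.inr k) (.inl ⟨(k:ℕ), _⟩)
      exact adj_rl.2 (Or.inl rfl)
    · exfalso; apply hv; apply mem_toSet.2 ⟨k, ?_⟩
      rw [ha]; rfl
    · show (triChain n).Adj (.inr k) (.inl ⟨(k:ℕ)+1, _⟩)
      exact adj_rl.2 (Or.inr rfl)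

lemma toSet_IDS {n : ℕ} {f : Fin n → Fin 3} (hn : 0 < n) (hf : Valid n f) :
    IsIndepDomSet (triChain n) (toSet f) :=
  ⟨indep_toSet hf, dom_toSet hn⟩

lemma adj_vtx_same {n : ℕ} (i : Fin n) {a b : Fin 3} (hab : a ≠ b) :
    (triChain n).Adj (vtx i a) (vtx i b) := by
  rcases fin3_cases a with ha | ha | ha <;> rcases fin3_cases b with hb | hb | hb <;>
    subst ha <;> subst hb <;> first
  | exact absurd rfl hab
  | exact adj_lr.2 (Or.inl rfl)
  | exact adj_rl.2 (Or.inl rfl)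
  | exact adj_ll.2 (Or.inl rfl)
  | exact adj_ll.2 (Or.inr rfl)
  | exact adj_lr.2 (Or.inr rfl)
  | exact adj_rl.2 (Or.inr rfl)

def pick {n : ℕ} (S : Finset (Fin (n+1) ⊕ Fin n)) (i : Fin n) : Fin 3 :=
  if Sum.inr i ∈ S then 1
  else if Sum.inl (⟨(i:ℕ), by omega⟩ : Fin (n+1)) ∈ S then 0 else 2

lemma pick_mem {n : ℕ} {S : Finset (Fin (n+1) ⊕ Fin n)}
    (hS : IsIndepDomSet (triChain n) S) (i : Fin n) : vtx i (pick S i) ∈ S := by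
  unfold pick
  by_cases h1 : Sum.inr i ∈ S
  · rw [if_pos h1]; exact h1
  · rw [if_neg h1]
    by_cases h2 : Sum.inl (⟨(i:ℕ), by omega⟩ : Fin (n+1)) ∈ S
    · rw [if_pos h2]; exact h2
    · rw [if_neg h2]
      obtain ⟨w, hw, hadj⟩ := hS.2 (Sum.inr i) h1
      rcases w with m | l
      · rcases adj_rl.1 hadj with h | h
        · exact absurd (by rwa [show m = (⟨(i:ℕ), by omega⟩ : Fin (n+1)) from Fin.ext h] at hw) h2
        · rwa [show (vtx i 2 : Fin (n+1) ⊕ Fin n) = Sum.inl m by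
            exact (vtx_eq_inl.2 (Or.inr ⟨rfl, h⟩))]
      · exact absurd hadj adj_rr

lemma pick_unique {n : ℕ} {S : Finset (Fin (n+1) ⊕ Fin n)}
    (hS : IsIndepDomSet (triChain n) S) {i : Fin n} {a : Fin 3}
    (ha : vtx i a ∈ S) : a = pick S i := by
  by_contra hab
  exact hS.1 _ ha _ (pick_mem hS i) (adj_vtx_same i hab)

lemma pick_valid {n : ℕ} {S : Finset (Fin (n+1) ⊕ Fin n)}
    (hS : IsIndepDomSet (triChain n) S) : Valid n (pick S) := by
  intro i h
  set j : Fin n := ⟨(i:ℕ)+1, h⟩ with hj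
  by_contra hbad
  have hmi := pick_mem hS i
  have hmj := pick_mem hS j
  have hcases : ∀ a b : Fin 3, ¬ (ok a b = true) →
      (a = 0 ∧ b = 0) ∨ (a = 1 ∧ b = 0) ∨ (a = 2 ∧ b = 1) ∨ (a = 2 ∧ b = 2) := by
    decide
  rcases hcases _ _ hbad with ⟨ha, hb⟩ | ⟨ha, hb⟩ | ⟨ha, hb⟩ | ⟨ha, hb⟩ <;>
      rw [ha] at hmi <;> rw [hb] at hmj <;>
      refine hS.1 _ hmi _ hmj ?_
  · exact adj_ll.2 (Or.inl rfl)
  · exact adj_rl.2 (Or.inr rfl)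
  · exact adj_lr.2 (Or.inl rfl)
  · exact adj_ll.2 (Or.inl rfl)

lemma toSet_pick {n : ℕ} (hn : 0 < n) {S : Finset (Fin (n+1) ⊕ Fin n)}
    (hS : IsIndepDomSet (triChain n) S) : toSet (pick S) = S := by
  apply Finset.Subset.antisymm
  · intro v hv
    obtain ⟨i, hi⟩ := mem_toSet.1 hv
    rw [← hi]; exact pick_mem hS i
  · intro v hv
    rcases v with j | k
    · by_cases h : (j:ℕ) < n
      · set i : Fin n := ⟨(j:ℕ), h⟩ with hidef
        have : Sum.inl j = vtx i 0 := by
          symm; exact vtx_eq_inl.2 (Or.inl ⟨rfl, rfl⟩)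
        rw [this] at hv ⊢
        rw [pick_unique hS hv]
        exact mem_toSet.2 ⟨i, rfl⟩
      · have hjn : (j:ℕ) = n := by omega
        have hn1 : n - 1 < n := by omega
        set i : Fin n := ⟨n-1, hn1⟩ with hidef
        have : Sum.inl j = vtx i 2 := by
          symm; exact vtx_eq_inl.2 (Or.inr ⟨rfl, by simp [hidef]; omega⟩)
        rw [this] at hv ⊢
        rw [pick_unique hS hv]
        exact mem_toSet.2 ⟨i, rfl⟩
    · have : Sum.inr k = vtx k 1 := rfl
      rw [this] at hv ⊢
      rw [pick_unique hS hv]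
      exact mem_toSet.2 ⟨k, rfl⟩

def Words (n : ℕ) := {f : Fin n → Fin 3 // Valid n f}

instance (n : ℕ) : Fintype (Words n) := Subtype.fintype _

noncomputable def wordsEquiv (n : ℕ) (hn : 0 < n) :
    Words n ≃ {S : Finset (Fin (n+1) ⊕ Fin n) // IsIndepDomSet (triChain n) S} where
  toFun w := ⟨toSet w.1, toSet_IDS hn w.2⟩
  invFun S := ⟨pick S.1, pick_valid S.2⟩
  left_inv w := by
    apply Subtype.ext
    funext i
    exact (pick_unique (toSet_IDS hn w.2) (mem_toSet.2 ⟨i, rfl⟩)).symm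
  right_inv S := Subtype.ext (toSet_pick hn S.2)

lemma snoc_mk_lt {k : ℕ} {α : Type} (u : Fin k → α) (x : α) {j : ℕ} (hj : j < k)
    (hj' : j < k+1) : (Fin.snoc u x : Fin (k+1) → α) ⟨j, hj'⟩ = u ⟨j, hj⟩ := by
  have h : (⟨j, hj'⟩ : Fin (k+1)) = Fin.castSucc ⟨j, hj⟩ := rfl
  rw [h, Fin.snoc_castSucc]

lemma snoc_mk_last {k : ℕ} {α : Type} (u : Fin k → α) (x : α) (hj : k < k+1) :
    (Fin.snoc u x : Fin (k+1) → α) ⟨k, hj⟩ = x := by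
  have h : (⟨k, hj⟩ : Fin (k+1)) = Fin.last k := rfl
  rw [h, Fin.snoc_last]

lemma valid_drop {k : ℕ} {f : Fin (k+1) → Fin 3} (hf : Valid (k+1) f) :
    Valid k (fun i => f i.castSucc) := by
  rintro ⟨iv, hiv⟩ h
  have h' : iv + 1 < k + 1 := by omega
  exact hf ⟨iv, Nat.lt_of_succ_lt h'⟩ h'

lemma valid_snoc {k : ℕ} {u : Fin (k+1) → Fin 3} {x : Fin 3} (hu : Valid (k+1) u)
    (hx : ok (u ⟨k, by omega⟩) x = true) : Valid (k+2) (Fin.snoc u x) := by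
  rintro ⟨iv, hiv⟩ h
  have h'' : iv + 1 < k + 2 := h
  have hi : iv < k + 1 := by omega
  rw [snoc_mk_lt u x hi]
  by_cases h2 : iv + 1 < k + 1
  · rw [snoc_mk_lt u x h2]
    exact hu ⟨iv, hi⟩ h2
  · have hik : iv = k := by omega
    subst hik
    rw [snoc_mk_last]
    exact hx

lemma ok_fill : ∀ a : Fin 3, ok a (if a = 2 then 0 else 1) = true := by decide

lemma ok_fill2 : ∀ a : Fin 3, ok (if a = 2 then (0:Fin 3) else 1) 2 = true := by decide

lemma fill_ne_two : ∀ a : Fin 3, (if a = 2 then (0:Fin 3) else 1) ≠ 2 := by decide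

lemma fill_eq_of_ok : ∀ a b : Fin 3, ok a b = true → b ≠ 2 →
    (if a = 2 then (0:Fin 3) else 1) = b := by decide

lemma fill_eq_of_ok2 : ∀ a b : Fin 3, ok a b = true → ok b 2 = true →
    (if a = 2 then (0:Fin 3) else 1) = b := by decide

def ext1 {m : ℕ} (u : Fin (m+2) → Fin 3) : Fin (m+3) → Fin 3 :=
  Fin.snoc u (if u ⟨m+1, by omega⟩ = 2 then 0 else 1)

def ext2 {m : ℕ} (u : Fin (m+1) → Fin 3) : Fin (m+3) → Fin 3 :=
  Fin.snoc (Fin.snoc u (if u ⟨m, by omega⟩ = 2 then 0 else 1)) 2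

lemma ext1_valid {m : ℕ} {u : Fin (m+2) → Fin 3} (hu : Valid (m+2) u) :
    Valid (m+3) (ext1 u) :=
  valid_snoc hu (ok_fill _)

lemma ext2_valid {m : ℕ} {u : Fin (m+1) → Fin 3} (hu : Valid (m+1) u) :
    Valid (m+3) (ext2 u) := by
  refine valid_snoc (valid_snoc hu (ok_fill _)) ?_
  rw [snoc_mk_last]
  exact ok_fill2 _

lemma ext1_last {m : ℕ} (u : Fin (m+2) → Fin 3) :
    ext1 u ⟨m+2, by omega⟩ = (if u ⟨m+1, by omega⟩ = 2 then 0 else 1) :=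
  snoc_mk_last _ _ _

lemma ext2_last {m : ℕ} (u : Fin (m+1) → Fin 3) :
    ext2 u ⟨m+2, by omega⟩ = 2 :=
  snoc_mk_last _ _ _

lemma drop_ext1 {m : ℕ} (u : Fin (m+2) → Fin 3) :
    (fun i : Fin (m+2) => ext1 u i.castSucc) = u := by
  funext i
  exact Fin.snoc_castSucc _ _ _

lemma drop_ext2 {m : ℕ} (u : Fin (m+1) → Fin 3) :
    (fun i : Fin (m+1) => ext2 u i.castSucc.castSucc) = u := by
  funext i
  show (Fin.snoc _ _ : Fin (m+3) → Fin 3) (Fin.castSucc (i.castSucc)) = u i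
  rw [Fin.snoc_castSucc, Fin.snoc_castSucc]

lemma ext1_drop {m : ℕ} (w : Fin (m+3) → Fin 3) (hw : Valid (m+3) w)
    (h : w ⟨m+2, by omega⟩ ≠ 2) : ext1 (fun i => w i.castSucc) = w := by
  funext i
  rcases i with ⟨iv, hiv⟩
  unfold ext1
  by_cases h1 : iv < m+2
  · rw [snoc_mk_lt _ _ h1]; rfl
  · have h3 : iv = m+2 := by omega
    subst h3
    rw [snoc_mk_last]
    have hok : ok (w ⟨m+1, by omega⟩) (w ⟨m+2, by omega⟩) = true :=
      hw ⟨m+1, by omega⟩ (show m+1+1 < m+3 by omega)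
    exact fill_eq_of_ok _ _ hok h

lemma ext2_drop {m : ℕ} (w : Fin (m+3) → Fin 3) (hw : Valid (m+3) w)
    (h : w ⟨m+2, by omega⟩ = 2) : ext2 (fun i => w i.castSucc.castSucc) = w := by
  funext i
  rcases i with ⟨iv, hiv⟩
  unfold ext2
  by_cases h1 : iv < m+1
  · rw [snoc_mk_lt _ _ (show iv < m+2 by omega), snoc_mk_lt _ _ h1]; rfl
  · by_cases h2 : iv = m+1
    · subst h2
      rw [snoc_mk_lt _ _ (show m+1 < m+2 by omega), snoc_mk_last]
      have hok1 : ok (w ⟨m, by omega⟩) (w ⟨m+1, by omega⟩) = true :=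
        hw ⟨m, by omega⟩ (show m+1 < m+3 by omega)
      have hok2 : ok (w ⟨m+1, by omega⟩) (w ⟨m+2, by omega⟩) = true :=
        hw ⟨m+1, by omega⟩ (show m+1+1 < m+3 by omega)
      rw [h] at hok2
      have := fill_eq_of_ok2 _ _ hok1 hok2
      convert this using 3
      rfl
    · have h3 : iv = m+2 := by omega
      subst h3
      rw [snoc_mk_last]
      exact h.symm

def fibToFun {m : ℕ} (w : Words (m+3)) : Words (m+2) ⊕ Words (m+1) :=
  if w.1 ⟨m+2, by omega⟩ = 2 then
    Sum.inr ⟨fun i => w.1 i.castSucc.castSucc, valid_drop (valid_drop w.2)⟩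
  else
    Sum.inl ⟨fun i => w.1 i.castSucc, valid_drop w.2⟩

def fibInvFun {m : ℕ} (s : Words (m+2) ⊕ Words (m+1)) : Words (m+3) :=
  match s with
  | Sum.inl u => ⟨ext1 u.1, ext1_valid u.2⟩
  | Sum.inr u => ⟨ext2 u.1, ext2_valid u.2⟩

def fibEquiv (m : ℕ) : Words (m+3) ≃ Words (m+2) ⊕ Words (m+1) where
  toFun := fibToFun
  invFun := fibInvFun
  left_inv w := by
    unfold fibToFun
    by_cases h : w.1 ⟨m+2, by omega⟩ = 2
    · rw [if_pos h]
      show (⟨ext2 _, _⟩ : Words (m+3)) = w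
      exact Subtype.ext (ext2_drop w.1 w.2 h)
    · rw [if_neg h]
      show (⟨ext1 _, _⟩ : Words (m+3)) = w
      exact Subtype.ext (ext1_drop w.1 w.2 h)
  right_inv s := by
    match s with
    | Sum.inl u =>
      show fibToFun ⟨ext1 u.1, ext1_valid u.2⟩ = Sum.inl u
      unfold fibToFun
      rw [if_neg (show ¬ ext1 u.1 ⟨m+2, by omega⟩ = 2 by rw [ext1_last]; exact fill_ne_two _)]
      exact congrArg Sum.inl (Subtype.ext (drop_ext1 u.1))
    | Sum.inr u =>
      show fibToFun ⟨ext2 u.1, ext2_valid u.2⟩ = Sum.inr u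
      unfold fibToFun
      rw [if_pos (ext2_last u.1)]
      exact congrArg Sum.inr (Subtype.ext (drop_ext2 u.1))

lemma numIDSTri_eq_card_words (n : ℕ) (hn : 0 < n) :
    numIDSTri n = Fintype.card (Words n) := by
  rw [numIDSTri, ← Nat.card_eq_fintype_card]
  exact Nat.card_congr (wordsEquiv n hn).symm

theorem numIDSTri_recurrence :
    numIDSTri 1 = 3 ∧ numIDSTri 2 = 5 ∧
      ∀ n : ℕ, 3 ≤ n → numIDSTri n = numIDSTri (n - 1) + numIDSTri (n - 2) := by
  refine ⟨?_, ?_, ?_⟩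
  · rw [numIDSTri_eq_card_words 1 one_pos]; decide
  · rw [numIDSTri_eq_card_words 2 (by omega)]; decide
  · intro n hn
    obtain ⟨m, rfl⟩ : ∃ m, n = m + 3 := ⟨n - 3, by omega⟩
    have h1 : m + 3 - 1 = m + 2 := by omega
    have h2 : m + 3 - 2 = m + 1 := by omega
    rw [h1, h2, numIDSTri_eq_card_words (m+3) (by omega),
      numIDSTri_eq_card_words (m+2) (by omega),
      numIDSTri_eq_card_words (m+1) (by omega),
      Fintype.card_congr (fibEquiv m), Fintype.card_sum]
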